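/- Let N ≥ 1 and n be natural numbers, k_B > 0 a real constant, X : Fin n → ℝ, E : Fin N → ℝ, x : Fin N → (Fin n → ℝ), and for each ω ∈ Fin N let f ω : ℝ → ℝ be differentiable with f ω T > 0 for all T. Define Z(T) = ∑_ω f ω T, p ω T = f ω T / Z(T), S(T) = −k_B ∑_ω p ω T * Real.log (p ω T), U(T) = ∑_ω p ω T * E ω, and χ η T = ∑_ω p ω T * x ω η. Then for every T > 0: T * S'(T) − U'(T) + ∑_η X η * (deriv (χ η)) T = −k_B * T * ∑_ω (deriv (fun T => p ω T) T) * (Real.log (f ω T) + (E ω − ∑_η X η * x ω η) / (k_B * T)). In particular, the first-law relation T dS = dU − ∑_η X_η dχ_η under a perturbation of T at fixed X and y holds at T if and only if ∑_ω (d/dT p ω T) * [log(f ω T) + (E ω − ∑_η X η x ω η)/(k_B T)] = 0. -/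

import Mathlib

/-- For positive differentiable weights f ω T, probabilities p ω T = f ω T / Z(T),
Gibbs-Shannon entropy S, average energy U and average displacements χ, at any T > 0:
T S'(T) − U'(T) + ∑ η X η (χ η)'(T)
  = −k_B T ∑ ω (d/dT p ω T) [log(f ω T) + (E ω − ∑ η X η x ω η)/(k_B T)].
In particular the first law dU = T dS + ∑ η X η dχ η under a perturbation of T holds
at T iff the bracketed weighted sum vanishes. -/
theorem first_law_iff_weighted_sum_vanishes
    (N n : ℕ) (hN : 1 ≤ N) (kB : ℝ) (hkB : 0 < kB)
    (X : Fin n → ℝ) (E : Fin N → ℝ) (x : Fin N → Fin n → ℝ)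
    (f : Fin N → ℝ → ℝ) (hf : ∀ ω, Differentiable ℝ (f ω))
    (hfpos : ∀ ω T, 0 < f ω T)
    (Z : ℝ → ℝ) (hZ : ∀ T, Z T = ∑ ω, f ω T)
    (p : Fin N → ℝ → ℝ) (hp : ∀ ω T, p ω T = f ω T / Z T)
    (S : ℝ → ℝ) (hS : ∀ T, S T = -kB * ∑ ω, p ω T * Real.log (p ω T))
    (U : ℝ → ℝ) (hU : ∀ T, U T = ∑ ω, p ω T * E ω)
    (χ : Fin n → ℝ → ℝ) (hχ : ∀ η T, χ η T = ∑ ω, p ω T * x ω η) :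
    ∀ T : ℝ, 0 < T →
      (T * deriv S T - deriv U T + ∑ η, X η * deriv (χ η) T =
        -kB * T * ∑ ω, deriv (fun T => p ω T) T *
          (Real.log (f ω T) + (E ω - ∑ η, X η * x ω η) / (kB * T))) ∧
      ((deriv U T = T * deriv S T + ∑ η, X η * deriv (χ η) T) ↔
        ∑ ω, deriv (fun T => p ω T) T *
          (Real.log (f ω T) + (E ω - ∑ η, X η * x ω η) / (kB * T)) = 0) := by
  intro T hT
  have hNe : Nonempty (Fin N) := Fin.pos_iff_nonempty.mp hN
  have hZpos : ∀ t, 0 < Z t := by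
    intro t
    rw [hZ]
    exact Finset.sum_pos (fun ω _ => hfpos ω t) Finset.univ_nonempty
  have hZfun : Z = fun t => ∑ ω, f ω t := funext hZ
  have hZdiff : Differentiable ℝ Z := by
    rw [hZfun]
    exact Differentiable.fun_sum fun ω _ => hf ω
  have hpfun : ∀ ω, p ω = fun t => f ω t / Z t := fun ω => funext (hp ω)
  have hpdiff : ∀ ω, Differentiable ℝ (p ω) := by
    intro ω
    rw [hpfun ω]
    exact (hf ω).div hZdiff fun t => (hZpos t).ne'
  have hppos : ∀ ω t, 0 < p ω t := by
    intro ω t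
    rw [hp]
    exact div_pos (hfpos ω t) (hZpos t)
  set q : Fin N → ℝ := fun ω => deriv (p ω) T with hq
  have hsum1 : (fun t => ∑ ω, p ω t) = fun _ => (1 : ℝ) := by
    funext t
    simp only [hp]
    rw [← Finset.sum_div, ← hZ, div_self (hZpos t).ne']
  have hqsum : ∑ ω, q ω = 0 := by
    have h1 : deriv (fun t => ∑ ω, p ω t) T = ∑ ω, q ω :=
      deriv_fun_sum fun ω _ => (hpdiff ω).differentiableAt
    rw [hsum1] at h1
    simp at h1
    exact h1.symm
  have hlogp : ∀ ω t, Real.log (p ω t) = Real.log (f ω t) - Real.log (Z t) := by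
    intro ω t
    rw [hp, Real.log_div (hfpos ω t).ne' (hZpos t).ne']
  -- derivative of S
  have hSterm : ∀ ω : Fin N, HasDerivAt (fun t => p ω t * Real.log (p ω t))
      (q ω * (Real.log (p ω T) + 1)) T := by
    intro ω
    have h1 : HasDerivAt (fun t => Real.log (p ω t)) ((p ω T)⁻¹ * q ω) T :=
      (Real.hasDerivAt_log (hppos ω T).ne').comp T ((hpdiff ω T).hasDerivAt)
    have h2 := ((hpdiff ω T).hasDerivAt).fun_mul h1
    refine h2.congr_deriv ?_
    rw [mul_inv_cancel_left₀ (hppos ω T).ne']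
    ring
  have hSderiv : HasDerivAt S (-kB * ∑ ω, q ω * (Real.log (p ω T) + 1)) T := by
    have : S = fun t => -kB * ∑ ω, p ω t * Real.log (p ω t) := funext hS
    rw [this]
    exact (HasDerivAt.fun_sum fun ω _ => hSterm ω).const_mul (-kB)
  have hsumS : ∑ ω, q ω * (Real.log (p ω T) + 1) = ∑ ω, q ω * Real.log (f ω T) := by
    have h1 : ∑ ω, q ω * (Real.log (p ω T) + 1)
        = ∑ ω, (q ω * Real.log (f ω T) + q ω * (1 - Real.log (Z T))) := by
      refine Finset.sum_congr rfl fun ω _ => ?_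
      rw [hlogp]
      ring
    rw [h1, Finset.sum_add_distrib, ← Finset.sum_mul, hqsum]
    simp
  have dS : deriv S T = -kB * ∑ ω, q ω * Real.log (f ω T) := by
    rw [hSderiv.deriv, hsumS]
  -- derivative of U
  have dU : deriv U T = ∑ ω, q ω * E ω := by
    have hUderiv : HasDerivAt U (∑ ω, q ω * E ω) T := by
      have : U = fun t => ∑ ω, p ω t * E ω := funext hU
      rw [this]
      exact HasDerivAt.fun_sum fun ω _ => ((hpdiff ω T).hasDerivAt).mul_const (E ω)
    exact hUderiv.deriv
  -- derivative of χ
  have dχ : ∀ η, deriv (χ η) T = ∑ ω, q ω * x ω η := by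
    intro η
    have hχderiv : HasDerivAt (χ η) (∑ ω, q ω * x ω η) T := by
      have : χ η = fun t => ∑ ω, p ω t * x ω η := funext (hχ η)
      rw [this]
      exact HasDerivAt.fun_sum fun ω _ => ((hpdiff ω T).hasDerivAt).mul_const (x ω η)
    exact hχderiv.deriv
  have hswap : ∑ η, X η * deriv (χ η) T = ∑ ω, q ω * ∑ η, X η * x ω η := by
    simp only [dχ, Finset.mul_sum]
    rw [Finset.sum_comm]
    refine Finset.sum_congr rfl fun ω _ => ?_
    refine Finset.sum_congr rfl fun η _ => ?_
    ring
  have hq' : ∀ ω : Fin N, deriv (fun t => p ω t) T = q ω := fun ω => rfl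
  have key : T * deriv S T - deriv U T + ∑ η, X η * deriv (χ η) T =
      -kB * T * ∑ ω, deriv (fun T => p ω T) T *
        (Real.log (f ω T) + (E ω - ∑ η, X η * x ω η) / (kB * T)) := by
    simp only [hq']
    rw [dS, dU, hswap, Finset.mul_sum, Finset.mul_sum, Finset.mul_sum,
      ← Finset.sum_sub_distrib, ← Finset.sum_add_distrib]
    refine Finset.sum_congr rfl fun ω _ => ?_
    field_simp
    ring
  refine ⟨key, ?_⟩
  have hiff : (deriv U T = T * deriv S T + ∑ η, X η * deriv (χ η) T) ↔
      T * deriv S T - deriv U T + ∑ η, X η * deriv (χ η) T = 0 := by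
    constructor <;> intro h <;> linarith
  rw [hiff, key]
  constructor
  · intro h
    have hne : -kB * T ≠ 0 := by
      rw [neg_mul]
      exact neg_ne_zero.mpr (mul_pos hkB hT).ne'
    exact (mul_eq_zero.mp h).resolve_left hne
  · intro h
    rw [h, mul_zero]
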